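/- Suppose all entries of π, of each π^{(t)}, and of each φ^{(t)} are nonnegative, and let r̃ be the Viterbi quantities. Let û : Fin T → Fin k be any path obtained by backtracking: û(T−1) maximizes v ↦ r̃(T−1, v), and for t = T−2 down to 0, û(t) maximizes u ↦ r̃(t, u) · π^{(t+1)}(u, û(t+1)). Then the weight of the backtracked path attains the maximum over all latent paths: w(û) = max_{ū : Fin T → Fin k} w(ū). -/
import Mathlib


/-!
Latent Markov model with `k ≥ 1` latent states, `l ≥ 1` response categories and
`T + 1 ≥ 1` time occasions (occasions are indexed by `0, …, T`, so that the last
occasion, written `T − 1` in the paper for `T` occasions, is here `T`).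
-/

/-- Extension of a partial latent path `ub : {0,…,t} → Fin k` to all of `ℕ`;
for `s ≤ t` it returns `ub s`. -/
def extPath {k t : ℕ} (u : Fin (t + 1) → Fin k) (s : ℕ) : Fin k :=
  u ⟨min s t, Nat.lt_succ_of_le (min_le_right s t)⟩

/-- The partial weight of a latent path up to occasion `t`.
For `t = T` (the last occasion) this is the full weight `w(ub)`. -/
noncomputable def pweight {k l : ℕ} (π : Fin k → ℝ) (P : ℕ → Fin k → Fin k → ℝ)
    (Φ : ℕ → Fin l → Fin k → ℝ) (y : ℕ → Fin l) (t : ℕ) (u : ℕ → Fin k) : ℝ :=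
  π (u 0) * (∏ s ∈ Finset.Icc 1 t, P s (u (s - 1)) (u s)) *
    ∏ s ∈ Finset.range (t + 1), Φ s (y s) (u s)

lemma pweight_succ {k l : ℕ} (π : Fin k → ℝ) (P : ℕ → Fin k → Fin k → ℝ)
    (Φ : ℕ → Fin l → Fin k → ℝ) (y : ℕ → Fin l) (t : ℕ) (u : ℕ → Fin k) :
    pweight π P Φ y (t + 1) u =
      pweight π P Φ y t u * P (t + 1) (u t) (u (t + 1)) * Φ (t + 1) (y (t + 1)) (u (t + 1)) := by
  unfold pweight
  rw [Finset.prod_Icc_succ_top (by omega : 1 ≤ t + 1), Finset.prod_range_succ]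
  simp only [Nat.add_sub_cancel]
  ring

/-- Correctness of the Viterbi backtracking: any path `û` obtained by
backtracking from the Viterbi quantities (`û T` maximizes `v ↦ r̃(T,v)` and, going
backwards, `û t` maximizes `u ↦ r̃(t,u)·π⁽ᵗ⁺¹⁾(u, û (t+1))`) attains the maximal weight
over all latent paths. -/
theorem viterbi_backtracking_attains_max
    (k l T : ℕ) (hk : 1 ≤ k) (hl : 1 ≤ l)
    (π : Fin k → ℝ) (P : ℕ → Fin k → Fin k → ℝ) (Φ : ℕ → Fin l → Fin k → ℝ)
    (hπ : ∀ u, 0 ≤ π u)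
    (hP : ∀ t, 1 ≤ t → t ≤ T → ∀ u v, 0 ≤ P t u v)
    (hΦ : ∀ t ≤ T, ∀ yv u, 0 ≤ Φ t yv u)
    (y : ℕ → Fin l) (r : ℕ → Fin k → ℝ)
    (hr0 : ∀ u, r 0 u = π u * Φ 0 (y 0) u)
    (hrrec : ∀ t, 1 ≤ t → t ≤ T → ∀ v,
      r t v = Φ t (y t) v *
        Finset.univ.sup' ⟨⟨0, hk⟩, Finset.mem_univ _⟩ (fun u => r (t - 1) u * P t u v))
    (uh : Fin (T + 1) → Fin k)
    (hlast : ∀ v, r T v ≤ r T (extPath uh T))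
    (hback : ∀ t < T, ∀ u,
      r t u * P (t + 1) u (extPath uh (t + 1)) ≤
        r t (extPath uh t) * P (t + 1) (extPath uh t) (extPath uh (t + 1))) :
    pweight π P Φ y T (extPath uh) =
      Finset.univ.sup' ⟨fun _ => ⟨0, hk⟩, Finset.mem_univ _⟩
        (fun ub : Fin (T + 1) → Fin k => pweight π P Φ y T (extPath ub)) := by
  have ne : (Finset.univ : Finset (Fin k)).Nonempty := ⟨⟨0, hk⟩, Finset.mem_univ _⟩
  have key : ∀ t, t ≤ T →
      (∀ u : ℕ → Fin k, pweight π P Φ y t u ≤ r t (u t)) ∧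
      pweight π P Φ y t (extPath uh) = r t (extPath uh t) := by
    intro t
    induction t with
    | zero =>
      intro _
      constructor
      · intro u; rw [hr0]; simp [pweight]
      · rw [hr0]; simp [pweight]
    | succ t ih =>
      intro ht
      obtain ⟨ih1, ih2⟩ := ih (by omega)
      have hΦt : 0 ≤ Φ (t + 1) (y (t + 1)) (extPath uh (t + 1)) := hΦ _ ht _ _
      have hsup : Finset.univ.sup' ne (fun u => r t u * P (t + 1) u (extPath uh (t + 1)))
          = r t (extPath uh t) * P (t + 1) (extPath uh t) (extPath uh (t + 1)) := by
        apply le_antisymm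
        · exact Finset.sup'_le _ _ fun u _ => hback t (by omega) u
        · exact Finset.le_sup' (fun u => r t u * P (t + 1) u (extPath uh (t + 1))) (Finset.mem_univ (extPath uh t))
      constructor
      · intro u
        rw [pweight_succ]
        have h1 : pweight π P Φ y t u * P (t + 1) (u t) (u (t + 1)) ≤
            r t (u t) * P (t + 1) (u t) (u (t + 1)) :=
          mul_le_mul_of_nonneg_right (ih1 u) (hP (t + 1) (by omega) ht _ _)
        have h2 : r t (u t) * P (t + 1) (u t) (u (t + 1)) ≤
            Finset.univ.sup' ne (fun w => r t w * P (t + 1) w (u (t + 1))) :=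
          Finset.le_sup' (fun w => r t w * P (t + 1) w (u (t + 1))) (Finset.mem_univ (u t))
        have := hrrec (t + 1) (by omega) ht (u (t + 1))
        simp only [Nat.add_sub_cancel] at this
        rw [this]
        calc pweight π P Φ y t u * P (t + 1) (u t) (u (t + 1)) * Φ (t + 1) (y (t + 1)) (u (t + 1))
            ≤ (Finset.univ.sup' ne (fun w => r t w * P (t + 1) w (u (t + 1)))) *
              Φ (t + 1) (y (t + 1)) (u (t + 1)) :=
              mul_le_mul_of_nonneg_right (h1.trans h2) (hΦ _ ht _ _)
          _ = _ := by ring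
      · rw [pweight_succ]
        have := hrrec (t + 1) (by omega) ht (extPath uh (t + 1))
        simp only [Nat.add_sub_cancel] at this
        rw [this, hsup, ih2]
        ring
  obtain ⟨k1, k2⟩ := key T le_rfl
  apply le_antisymm
  · exact Finset.le_sup' (fun ub : Fin (T + 1) → Fin k => pweight π P Φ y T (extPath ub)) (Finset.mem_univ uh)
  · apply Finset.sup'_le
    intro ub _
    calc pweight π P Φ y T (extPath ub) ≤ r T (extPath ub T) := k1 _
      _ ≤ r T (extPath uh T) := hlast _
      _ = pweight π P Φ y T (extPath uh) := k2.symm
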